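/- For a regular groupoid action, the convolution product on A[G] is well defined: if f = Σ a_t·t and g = Σ b_u·u with a_t ∈ D(β_{t⁻¹}) and b_u ∈ D(β_{u⁻¹}), then each coefficient Σ_{(t⁻¹,s) ∈ G^(2)} a_t β_t(b_{t⁻¹s}) of the product fg lies in D(β_{s⁻¹}), and the involution f* = Σ_t β_t(a*_{t⁻¹})·t satisfies the coefficient condition β_t(a*_{t⁻¹}) ∈ D(β_{t⁻¹}). -/
import Mathlib


/-- An algebraic (object-free) presentation of a small category: a set `M` of
morphisms with source and target maps `src, tgt : M → M` (whose common image
is the set of identity morphisms, playing the role of objects) and a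
composition `comp`, which is only required to behave well on composable pairs
(`src f = tgt g`). -/
structure SmallCat (M : Type*) where
  src : M → M
  tgt : M → M
  comp : M → M → M
  src_src : ∀ f, src (src f) = src f
  tgt_src : ∀ f, tgt (src f) = src f
  src_tgt : ∀ f, src (tgt f) = tgt f
  tgt_tgt : ∀ f, tgt (tgt f) = tgt f
  src_comp : ∀ f g, src f = tgt g → src (comp f g) = src g
  tgt_comp : ∀ f g, src f = tgt g → tgt (comp f g) = tgt f
  comp_assoc : ∀ f g k, src f = tgt g → src g = tgt k →
    comp (comp f g) k = comp f (comp g k)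
  id_comp : ∀ f, comp (tgt f) f = f
  comp_id : ∀ f, comp f (src f) = f

/-- A groupoid: a small category in which every morphism is invertible. -/
structure GroupoidAlg (M : Type*) extends SmallCat M where
  inv : M → M
  src_inv : ∀ f, src (inv f) = tgt f
  tgt_inv : ∀ f, tgt (inv f) = src f
  comp_inv : ∀ f, comp f (inv f) = tgt f
  inv_comp : ∀ f, comp (inv f) f = src f

variable {Γ : Type*} (A : Type*) [NonUnitalNormedRing A] [StarRing A]
  [NormedSpace ℂ A] [IsScalarTower ℂ A A] [SMulCommClass ℂ A A] [StarModule ℂ A]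

/-- A quasi action of a discrete groupoid `G` on a C*-algebra `A`: each `g`
is assigned a *-homomorphism `β g : A → A` together with a closed
*-subalgebra `D g ⊆ A` on which `β g` restricts to a *-isomorphism onto
`β g (A)`, such that for composable `(s,t)` one has `β t (A) = D s`,
`D (st) = D t` and `β (st) = β s ∘ β t`, while `β s ∘ β t = 0` for
non-composable `(s,t)`. -/
structure QuasiAction (G : GroupoidAlg Γ) where
  β : Γ → A →⋆ₙₐ[ℂ] A
  D : Γ → NonUnitalStarSubalgebra ℂ A
  closedD : ∀ g, IsClosed (D g : Set A)
  injD : ∀ g, Set.InjOn (β g) (D g)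
  rangeD : ∀ g a, ∃ d ∈ D g, β g a = β g d
  range_eq : ∀ s t, G.src s = G.tgt t → Set.range (β t) = (D s : Set A)
  dom_comp : ∀ s t, G.src s = G.tgt t → D (G.comp s t) = D t
  map_comp : ∀ s t, G.src s = G.tgt t → ∀ a, β (G.comp s t) a = β s (β t a)
  zero_ncomp : ∀ s t, G.src s ≠ G.tgt t → ∀ a, β s (β t a) = 0

open Classical

/-- The coefficient at `s` of the convolution product `fg` in `A[G]`:
`Σ_{(t⁻¹,s) ∈ G⁽²⁾} a_t · β_t(b_{t⁻¹ s})`. -/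
noncomputable def convCoef {Γ : Type*} {A : Type*} [NonUnitalNormedRing A] [StarRing A]
    [NormedSpace ℂ A] [IsScalarTower ℂ A A] [SMulCommClass ℂ A A] [StarModule ℂ A]
    {G : GroupoidAlg Γ} (Q : QuasiAction A G) (a b : Γ → A) (s : Γ) : A :=
  ∑ᶠ t, if G.src (G.inv t) = G.tgt s then a t * Q.β t (b (G.comp (G.inv t) s)) else 0

/-- The coefficient at `t` of the involution `f* = Σ_t β_t(a*_{t⁻¹})·t`. -/
noncomputable def involCoef {Γ : Type*} {A : Type*} [NonUnitalNormedRing A] [StarRing A]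
    [NormedSpace ℂ A] [IsScalarTower ℂ A A] [SMulCommClass ℂ A A] [StarModule ℂ A]
    {G : GroupoidAlg Γ} (Q : QuasiAction A G) (a : Γ → A) (t : Γ) : A :=
  Q.β t (star (a (G.inv t)))

/-- The convolution product and involution on `A[G]` are well defined: if
`f = Σ a_t·t` and `g = Σ b_u·u` are finitely supported with
`a_t ∈ D(β_{t⁻¹})` and `b_u ∈ D(β_{u⁻¹})`, then every coefficient
`Σ_{(t⁻¹,s)∈G⁽²⁾} a_t β_t(b_{t⁻¹s})` of `fg` lies in `D(β_{s⁻¹})` (indeed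
each summand does), and every coefficient `β_t(a*_{t⁻¹})` of `f*` lies in
`D(β_{t⁻¹})`. -/
theorem stmt12 {Γ : Type*} {A : Type*} [NonUnitalNormedRing A] [StarRing A]
    [NormedSpace ℂ A] [IsScalarTower ℂ A A] [SMulCommClass ℂ A A] [StarModule ℂ A]
    {G : GroupoidAlg Γ} (Q : QuasiAction A G) (a b : Γ → A)
    (ha : (Function.support a).Finite) (hb : (Function.support b).Finite)
    (hda : ∀ t, a t ∈ Q.D (G.inv t)) (hdb : ∀ t, b t ∈ Q.D (G.inv t)) :
    (∀ s t, G.src (G.inv t) = G.tgt s →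
      a t * Q.β t (b (G.comp (G.inv t) s)) ∈ Q.D (G.inv s)) ∧
    (∀ s, convCoef Q a b s ∈ Q.D (G.inv s)) ∧
    (∀ t, involCoef Q a t ∈ Q.D (G.inv t)) := by
  have hrange : ∀ t, Set.range (Q.β t) = (Q.D (G.inv t) : Set A) := fun t =>
    Q.range_eq (G.inv t) t (G.src_inv t)
  have key : ∀ s t, G.src (G.inv t) = G.tgt s →
      a t * Q.β t (b (G.comp (G.inv t) s)) ∈ Q.D (G.inv s) := by
    intro s t h
    have htt : G.tgt t = G.tgt s := by rw [← G.src_inv t]; exact h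
    have hDeq : (Q.D (G.inv t) : Set A) = (Q.D (G.inv s) : Set A) := by
      rw [← hrange t, Q.range_eq (G.inv s) t (by rw [G.src_inv s, ← htt])]
    have ha' : a t ∈ Q.D (G.inv s) := by
      have h2 : a t ∈ (Q.D (G.inv t) : Set A) := hda t
      rw [hDeq] at h2
      exact h2
    have hb' : Q.β t (b (G.comp (G.inv t) s)) ∈ Q.D (G.inv s) := by
      rw [← SetLike.mem_coe, ← Q.range_eq (G.inv s) t (by rw [G.src_inv s, ← htt])]
      exact Set.mem_range_self _
    exact mul_mem ha' hb'
  refine ⟨key, ?_, ?_⟩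
  · intro s
    refine finsum_induction _ (zero_mem _) (fun x y hx hy => add_mem hx hy) ?_
    intro t
    split_ifs with h
    · exact key s t h
    · exact zero_mem _
  · intro t
    rw [← SetLike.mem_coe, ← hrange t]
    exact Set.mem_range_self _
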